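/- Define, for real m > −1 and real λ such that D(m,λ) := (1+m)⁴ + (π⁴λ²/3)(2+m) − π²λ(1+m)² ≠ 0: η(m,λ) = 4π²λ ((1+m)² − (π²λ/2)(2+m)) / D(m,λ), β_m(m,λ) = −(2 + η(m,λ)) m − (10π²λ/(1+m)²)(1 + η(m,λ)/6), and β_λ(m,λ) = −2 η(m,λ) λ + (4π²λ²/(1+m)³)(1 + η(m,λ)/6) (1 − π²λ (1/(1+m)² + 1 + 1/(1+m))). Then there exists a non-Gaussian fixed point: a pair (m*, λ*) with −1 < m* < 0, λ* > 0 and D(m*,λ*) ≠ 0 such that β_m(m*,λ*) = 0 and β_λ(m*,λ*) = 0. -/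

import Mathlib

open Real

/-- Denominator of the improved anomalous dimension. -/
noncomputable def Dden (m lam : ℝ) : ℝ :=
  (1 + m) ^ 4 + (π ^ 4 * lam ^ 2 / 3) * (2 + m) - π ^ 2 * lam * (1 + m) ^ 2

/-- Improved anomalous dimension from the melonic structure equations. -/
noncomputable def etaImp (m lam : ℝ) : ℝ :=
  4 * π ^ 2 * lam * ((1 + m) ^ 2 - (π ^ 2 * lam / 2) * (2 + m)) / Dden m lam

/-- Improved beta function of the dimensionless mass squared. -/
noncomputable def betaMImp (m lam : ℝ) : ℝ :=
  -(2 + etaImp m lam) * m - (10 * π ^ 2 * lam / (1 + m) ^ 2) * (1 + etaImp m lam / 6)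

/-- Improved beta function of the dimensionless quartic melonic coupling. -/
noncomputable def betaLamImp (m lam : ℝ) : ℝ :=
  -2 * etaImp m lam * lam
    + (4 * π ^ 2 * lam ^ 2 / (1 + m) ^ 3) * (1 + etaImp m lam / 6) *
      (1 - π ^ 2 * lam * (1 / (1 + m) ^ 2 + 1 + 1 / (1 + m)))

/-! ### Auxiliary machinery -/

/-- Quadratic (in `A = π²λ`) whose positive root parametrizes the curve on which the
coupling beta function vanishes (given the mass beta function vanishes). -/
noncomputable def qpoly (m A : ℝ) : ℝ :=
  -2*m*(3+3*m+m^2)*A^2 + (15*(1+m)^3+2*m*(1+m)^2)*A + 3*m*(1+m)^5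

/-- Numerator of the mass beta function, as a polynomial in `m` and `A = π²λ`. -/
noncomputable def Ppoly (m A : ℝ) : ℝ :=
  -(2*((1+m)^4 + A^2*(2+m)/3 - A*(1+m)^2) + (4*A*(1+m)^2 - 2*A^2*(2+m)))*m*(1+m)^2
  - 10*A*(((1+m)^4 + A^2*(2+m)/3 - A*(1+m)^2) + (4*A*(1+m)^2 - 2*A^2*(2+m))/6)

/-- Numerator of the coupling beta function (divided by `λ`). -/
noncomputable def Qupoly (m A : ℝ) : ℝ :=
  -2*(4*A*(1+m)^2 - 2*A^2*(2+m))*(1+m)^5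
  + 4*A*(((1+m)^4 + A^2*(2+m)/3 - A*(1+m)^2) + (4*A*(1+m)^2 - 2*A^2*(2+m))/6)
      *((1+m)^2 - A*(3+3*m+m^2))

/-- The positive root of `qpoly m ·`. -/
noncomputable def Asol (m : ℝ) : ℝ :=
  (-(15*(1+m)^3+2*m*(1+m)^2)
    + Real.sqrt ((15*(1+m)^3+2*m*(1+m)^2)^2 + 24*m^2*(3+3*m+m^2)*(1+m)^5))
  / (-4*m*(3+3*m+m^2))

lemma quad_root (a b c s : ℝ) (ha : a ≠ 0) (hs : s^2 = b^2 - 4*a*c) :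
    a * ((-b + s)/(2*a))^2 + b * ((-b + s)/(2*a)) + c = 0 := by
  field_simp
  first
  | linear_combination a * hs
  | linear_combination (2*a^2 - a) * hs
  | linear_combination (a - 2*a^2) * hs
  | linear_combination (-a) * hs
  | linear_combination 2*a^2 * hs
  | linear_combination hs

lemma asol_facts (m : ℝ) (h1 : (-3:ℝ)/5 ≤ m) (h2 : m ≤ (-1:ℝ)/2) :
    0 < Asol m ∧ qpoly m (Asol m) = 0 := by
  have h3 : (0:ℝ) < 3+3*m+m^2 := by nlinarith
  have hu : (0:ℝ) < 1+m := by linarith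
  have h5 : (0:ℝ) < (1+m)^5 := pow_pos hu 5
  have hm2 : (0:ℝ) < m^2 := by nlinarith
  have ha : -2*m*(3+3*m+m^2) ≠ 0 := by nlinarith
  have hden : (0:ℝ) < -4*m*(3+3*m+m^2) := by nlinarith
  set b : ℝ := 15*(1+m)^3+2*m*(1+m)^2 with hb
  set disc : ℝ := b^2 + 24*m^2*(3+3*m+m^2)*(1+m)^5 with hdisc
  have hbpos : 0 < b := by rw [hb]; nlinarith
  have hdiscb : b^2 < disc := by
    rw [hdisc]; nlinarith [mul_pos (mul_pos hm2 h3) h5]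
  have hdisc0 : 0 ≤ disc := by nlinarith
  have hs2 : Real.sqrt disc ^ 2 = disc := Real.sq_sqrt hdisc0
  have hsb : b < Real.sqrt disc := by
    nlinarith [Real.sqrt_nonneg disc, hs2]
  have hA : Asol m = (-b + Real.sqrt disc) / (2 * (-2*m*(3+3*m+m^2))) := by
    rw [Asol, ← hb, ← hdisc]; ring_nf
  constructor
  · rw [hA]
    apply div_pos (by linarith) (by nlinarith)
  · have hq : qpoly m (Asol m) = -2*m*(3+3*m+m^2) * (Asol m)^2 + b * (Asol m) + 3*m*(1+m)^5 := by
      rw [qpoly, hb]; try ring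
    rw [hq, hA]
    apply quad_root _ _ _ _ ha
    rw [hs2, hdisc]
    ring

lemma key_identity (m A : ℝ) :
    5*A*(Qupoly m A)
      + (1+m)^2*(2*((1+m)^4 + A^2*(2+m)/3 - A*(1+m)^2)
          + (4*A*(1+m)^2 - 2*A^2*(2+m)))*(qpoly m A)
      + (3*(1+m)^5 + 2*A*((1+m)^2 - A*(3+3*m+m^2)))*(Ppoly m A) = 0 := by
  unfold Qupoly qpoly Ppoly; ring

lemma left_sign (A : ℝ) (hA : 0 < A) (hq : qpoly (-3/5) A = 0) :
    Ppoly (-3/5) A < 0 := by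
  rw [qpoly] at hq; norm_num at hq
  have h1 : A ≤ 3/125 := by nlinarith [sq_nonneg A]
  have h2 : (22596:ℝ)/1000000 ≤ A := by nlinarith
  have h3 : A ≤ (22756:ℝ)/1000000 := by nlinarith
  have h4 : (22737:ℝ)/1000000 ≤ A := by nlinarith
  rw [Ppoly]; norm_num
  nlinarith [mul_nonneg (sub_nonneg.2 h4) (sub_nonneg.2 h3)]

lemma right_sign (A : ℝ) (hA : 0 < A) (hq : qpoly (-1/2) A = 0) :
    0 < Ppoly (-1/2) A := by
  rw [qpoly] at hq; norm_num at hq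
  have h1 : A ≤ 3/104 := by nlinarith [sq_nonneg A]
  have h2 : (2795:ℝ)/100000 ≤ A := by nlinarith
  have h3 : A ≤ (2801:ℝ)/100000 := by nlinarith
  rw [Ppoly]; norm_num
  nlinarith [mul_nonneg (sub_nonneg.2 h2) (sub_nonneg.2 h3)]

lemma A_small (m A : ℝ) (h1 : (-3:ℝ)/5 ≤ m) (h2 : m ≤ (-1:ℝ)/2)
    (hA : 0 < A) (hq : qpoly m A = 0) : A ≤ 1/10 := by
  rw [qpoly] at hq
  have hb : (768:ℝ)/1000 ≤ 15*(1+m)^3+2*m*(1+m)^2 := by nlinarith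
  have hm0 : (0:ℝ) ≤ -2*m := by linarith
  have h3m : (0:ℝ) ≤ 3+3*m+m^2 := by nlinarith
  have hterm : 0 ≤ -2*m*(3+3*m+m^2)*A^2 :=
    mul_nonneg (mul_nonneg hm0 h3m) (sq_nonneg A)
  have h12 : (0:ℝ) ≤ (m+3/5)*(-1/2-m) := by nlinarith
  have hc : -3*m*(1+m)^5 ≤ 48/1000 := by
    nlinarith [h12, mul_nonneg h12 h12, mul_nonneg h12 (sq_nonneg (m+1/2)),
      mul_nonneg h12 (sq_nonneg (m+3/5)), sq_nonneg (m+1/2), sq_nonneg (m+3/5)]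
  by_contra hcon
  push_neg at hcon
  nlinarith [mul_nonneg (by linarith : (0:ℝ) ≤ 15*(1+m)^3+2*m*(1+m)^2 - 768/1000)
      (by linarith : (0:ℝ) ≤ A - 1/10)]

lemma D_pos (m A : ℝ) (h1 : (-3:ℝ)/5 ≤ m) (h2 : m ≤ (-1:ℝ)/2)
    (hA : 0 < A) (hq : qpoly m A = 0) :
    0 < (1+m)^4 + A^2*(2+m)/3 - A*(1+m)^2 := by
  have hAs := A_small m A h1 h2 hA hq
  have hu2 : (16:ℝ)/100 ≤ (1+m)^2 := by nlinarith
  nlinarith [mul_nonneg (by linarith : (0:ℝ) ≤ (1+m)^2 - 16/100)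
      (by linarith : (0:ℝ) ≤ 1/10 - A), mul_pos hA hA]

set_option maxHeartbeats 2000000 in
lemma betaM_eq (m lam : ℝ) (hun : (1:ℝ)+m ≠ 0)
    (hDne : (1+m)^4 + (π^2*lam)^2*(2+m)/3 - (π^2*lam)*(1+m)^2 ≠ 0) :
    betaMImp m lam * ((1+m)^2 * ((1+m)^4 + (π^2*lam)^2*(2+m)/3 - (π^2*lam)*(1+m)^2))
      = Ppoly m (π^2*lam) := by
  have hD : Dden m lam = (1+m)^4 + (π^2*lam)^2*(2+m)/3 - (π^2*lam)*(1+m)^2 := by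
    rw [Dden]; ring
  have hD0 : Dden m lam ≠ 0 := by rw [hD]; exact hDne
  rw [betaMImp, etaImp, Ppoly]
  field_simp
  rw [hD]
  ring

set_option maxHeartbeats 2000000 in
lemma betaLam_eq (m lam : ℝ) (hun : (1:ℝ)+m ≠ 0)
    (hDne : (1+m)^4 + (π^2*lam)^2*(2+m)/3 - (π^2*lam)*(1+m)^2 ≠ 0) :
    betaLamImp m lam * ((1+m)^5 * ((1+m)^4 + (π^2*lam)^2*(2+m)/3 - (π^2*lam)*(1+m)^2))
      = lam * Qupoly m (π^2*lam) := by
  have hD : Dden m lam = (1+m)^4 + (π^2*lam)^2*(2+m)/3 - (π^2*lam)*(1+m)^2 := by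
    rw [Dden]; ring
  have hD0 : Dden m lam ≠ 0 := by rw [hD]; exact hDne
  rw [betaLamImp, etaImp, Qupoly]
  field_simp
  rw [hD]
  ring

/-- Existence of a non-Gaussian (Wilson–Fisher-like) fixed point of the improved
melonic flow equations. -/
theorem exists_nonGaussian_fixed_point_improved :
    ∃ m lam : ℝ, -1 < m ∧ m < 0 ∧ 0 < lam ∧ Dden m lam ≠ 0 ∧
      betaMImp m lam = 0 ∧ betaLamImp m lam = 0 := by
  -- continuity of the curve function
  have hnum : Continuous fun m : ℝ => (-(15*(1+m)^3+2*m*(1+m)^2)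
      + Real.sqrt ((15*(1+m)^3+2*m*(1+m)^2)^2 + 24*m^2*(3+3*m+m^2)*(1+m)^5)) := by
    apply Continuous.add (by fun_prop)
    exact Real.continuous_sqrt.comp (by fun_prop)
  have hdenc : Continuous fun m : ℝ => -4*m*(3+3*m+m^2) := by fun_prop
  have hAc : ContinuousOn Asol (Set.Icc ((-3:ℝ)/5) ((-1:ℝ)/2)) := by
    unfold Asol
    apply ContinuousOn.div hnum.continuousOn hdenc.continuousOn
    intro x hx
    obtain ⟨hx1, hx2⟩ := hx
    nlinarith
  have hfc : ContinuousOn (fun x => Ppoly x (Asol x)) (Set.Icc ((-3:ℝ)/5) ((-1:ℝ)/2)) := by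
    unfold Ppoly
    fun_prop
  -- endpoint values
  obtain ⟨hApos_l, hq_l⟩ := asol_facts (-3/5) (le_refl _) (by norm_num)
  obtain ⟨hApos_r, hq_r⟩ := asol_facts (-1/2) (by norm_num) (le_refl _)
  have hfl : Ppoly (-3/5) (Asol (-3/5)) < 0 := left_sign _ hApos_l hq_l
  have hfr : 0 < Ppoly (-1/2) (Asol (-1/2)) := right_sign _ hApos_r hq_r
  -- intermediate value theorem
  have hsub := intermediate_value_Icc (by norm_num : ((-3:ℝ)/5) ≤ (-1:ℝ)/2) hfc
  obtain ⟨m, hmI, hfm⟩ := hsub ⟨hfl.le, hfr.le⟩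
  obtain ⟨hm1, hm2⟩ := hmI
  obtain ⟨hApos, hq0⟩ := asol_facts m hm1 hm2
  set A := Asol m with hAdef
  have hfm' : Ppoly m A = 0 := hfm
  have hu : (0:ℝ) < 1 + m := by linarith
  have hun : (1:ℝ) + m ≠ 0 := ne_of_gt hu
  have hpi : (0:ℝ) < π ^ 2 := by positivity
  have hpl : π^2 * (A / π^2) = A := by field_simp
  have hEpos : 0 < (1+m)^4 + A^2*(2+m)/3 - A*(1+m)^2 := D_pos m A hm1 hm2 hApos hq0
  have hDne : (1+m)^4 + (π^2*(A/π^2))^2*(2+m)/3 - (π^2*(A/π^2))*(1+m)^2 ≠ 0 := by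
    rw [hpl]; exact ne_of_gt hEpos
  -- the coupling beta numerator vanishes
  have hid := key_identity m A
  rw [hq0, hfm'] at hid
  have hQu : Qupoly m A = 0 := by
    have h5A : (5:ℝ)*A ≠ 0 := by positivity
    have : 5*A*(Qupoly m A) = 0 := by linarith [hid]
    exact (mul_eq_zero.mp this).resolve_left h5A
  -- assemble
  have hbm := betaM_eq m (A/π^2) hun hDne
  have hbl := betaLam_eq m (A/π^2) hun hDne
  rw [hpl] at hbm hbl
  rw [hfm'] at hbm
  rw [hQu, mul_zero] at hbl
  have hfac2 : ((1+m)^2 * ((1+m)^4 + A^2*(2+m)/3 - A*(1+m)^2)) ≠ 0 := by positivity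
  have hfac5 : ((1+m)^5 * ((1+m)^4 + A^2*(2+m)/3 - A*(1+m)^2)) ≠ 0 := by positivity
  have hDden0 : Dden m (A/π^2) ≠ 0 := by
    have hD : Dden m (A/π^2) = (1+m)^4 + (π^2*(A/π^2))^2*(2+m)/3 - (π^2*(A/π^2))*(1+m)^2 := by
      rw [Dden]; ring
    rw [hD, hpl]
    exact ne_of_gt hEpos
  refine ⟨m, A / π^2, by linarith, by linarith, div_pos hApos hpi, hDden0, ?_, ?_⟩
  · exact (mul_eq_zero.mp hbm).resolve_right hfac2
  · exact (mul_eq_zero.mp hbl).resolve_right hfac5
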